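/- Let g be a real nilpotent Lie algebra with a complex structure J such that g_k ∩ J(g_k) = {0} for some k ≥ 1. Suppose r > 1 is the smallest integer such that g_{k+r} ∩ J(g_k) ≠ {0}. Then g_{k+r-1} ∩ J(g_{k+r-1}) ≠ {0}. -/
import Mathlib


/-- The ascending central series of a Lie algebra:
`acs g 0 = 0`, `acs g (k+1) = {X | [X,g] ⊆ acs g k}`. -/
def acs (g : Type*) [LieRing g] [LieAlgebra ℝ g] : ℕ → Submodule ℝ g
  | 0 => ⊥
  | k + 1 =>
    { carrier := {X : g | ∀ Y : g, ⁅X, Y⁆ ∈ acs g k}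
      zero_mem' := by intro Y; simp
      add_mem' := by
        intro a b ha hb Y
        rw [add_lie]; exact (acs g k).add_mem (ha Y) (hb Y)
      smul_mem' := by
        intro c x hx Y
        rw [smul_lie]; exact (acs g k).smul_mem c (hx Y) }

lemma mem_acs_succ {g : Type*} [LieRing g] [LieAlgebra ℝ g] {n : ℕ} {X : g} :
    X ∈ acs g (n + 1) ↔ ∀ Y : g, ⁅X, Y⁆ ∈ acs g n := Iff.rfl

lemma acs_mono_succ (g : Type*) [LieRing g] [LieAlgebra ℝ g] (m : ℕ) :
    acs g m ≤ acs g (m + 1) := by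
  induction m with
  | zero => exact bot_le
  | succ n ih =>
    intro X hX
    rw [mem_acs_succ] at hX ⊢
    exact fun Y => ih (hX Y)

lemma acs_mono (g : Type*) [LieRing g] [LieAlgebra ℝ g] {m n : ℕ} (h : m ≤ n) :
    acs g m ≤ acs g n := by
  induction n with
  | zero => simp_all
  | succ n ih =>
    rcases Nat.lt_or_ge m (n + 1) with h' | h'
    · exact le_trans (ih (Nat.lt_succ_iff.mp h')) (acs_mono_succ g n)
    · have : m = n + 1 := le_antisymm h h'
      subst this; exact le_rfl

/-- if `g_k ∩ J(g_k) = 0` and `r > 1` is the smallest integer with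
`g_{k+r} ∩ J(g_k) ≠ 0`, then `g_{k+r-1} ∩ J(g_{k+r-1}) ≠ 0`. -/
theorem acs_inf_J_ne_bot_of_minimal (g : Type*) [LieRing g] [LieAlgebra ℝ g]
    [FiniteDimensional ℝ g] (hnil : ∃ s : ℕ, acs g s = ⊤)
    (J : g →ₗ[ℝ] g) (hJ2 : ∀ X : g, J (J X) = -X)
    (hN : ∀ X Y : g, ⁅X, Y⁆ + J ⁅J X, Y⁆ + J ⁅X, J Y⁆ - ⁅J X, J Y⁆ = 0)
    (k : ℕ) (hk : 1 ≤ k)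
    (h : acs g k ⊓ (acs g k).map J = ⊥)
    (r : ℕ) (hr : 1 < r)
    (hne : acs g (k + r) ⊓ (acs g k).map J ≠ ⊥)
    (hmin : ∀ r' : ℕ, 0 < r' → r' < r → acs g (k + r') ⊓ (acs g k).map J = ⊥) :
    acs g (k + r - 1) ⊓ (acs g (k + r - 1)).map J ≠ ⊥ := by
  set m := k + r - 1 with hm
  have hm1 : k + r = m + 1 := by omega
  have hk1 : k = (k - 1) + 1 := by omega
  have hJinj : ∀ Z : g, J Z = 0 → Z = 0 := by
    intro Z hZ
    have h2 := hJ2 Z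
    rw [hZ, map_zero] at h2
    exact neg_eq_zero.mp h2.symm
  obtain ⟨X, hX, hX0⟩ := (Submodule.ne_bot_iff _).mp hne
  obtain ⟨hX1, hX2⟩ := hX
  -- J X ∈ acs g k
  obtain ⟨y, hy, hyX⟩ := hX2
  have hJX : J X ∈ acs g k := by
    have : J X = -y := by rw [← hyX, hJ2]
    rw [this]; exact (acs g k).neg_mem hy
  -- brackets with X land in acs g m
  have hbrX : ∀ Y : g, ⁅X, Y⁆ ∈ acs g m := by
    rw [hm1] at hX1; exact hX1
  -- brackets with J X land in acs g (k-1) ⊆ acs g m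
  have hbrJX : ∀ Y : g, ⁅J X, Y⁆ ∈ acs g m := by
    intro Y
    have h1 : ⁅J X, Y⁆ ∈ acs g (k - 1) := by
      rw [hk1] at hJX; exact hJX Y
    exact acs_mono g (by omega) h1
  intro hbot
  -- each W_Y := ⁅X,Y⁆ - ⁅JX,JY⁆ is in the intersection, hence 0
  have key : ∀ Y : g, ⁅X, Y⁆ - ⁅J X, J Y⁆ = 0 ∧ ⁅J X, Y⁆ + ⁅X, J Y⁆ = 0 := by
    intro Y
    have hA : ⁅J X, Y⁆ + ⁅X, J Y⁆ ∈ acs g m :=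
      (acs g m).add_mem (hbrJX Y) (hbrX (J Y))
    have hW : ⁅X, Y⁆ - ⁅J X, J Y⁆ = J (-(⁅J X, Y⁆ + ⁅X, J Y⁆)) := by
      have hn := hN X Y
      rw [map_neg, map_add]
      have h3 : ⁅X, Y⁆ - ⁅J X, J Y⁆ + (J ⁅J X, Y⁆ + J ⁅X, J Y⁆) = 0 := by
        rw [← hn]; abel
      exact eq_neg_of_add_eq_zero_left h3
    have hWmem : ⁅X, Y⁆ - ⁅J X, J Y⁆ ∈ acs g m ⊓ (acs g m).map J := by
      constructor
      · exact (acs g m).sub_mem (hbrX Y) (hbrJX (J Y))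
      · exact ⟨-(⁅J X, Y⁆ + ⁅X, J Y⁆), (acs g m).neg_mem hA, hW.symm⟩
    rw [hbot] at hWmem
    have hW0 : ⁅X, Y⁆ - ⁅J X, J Y⁆ = 0 := hWmem
    refine ⟨hW0, ?_⟩
    have h4 : J (-(⁅J X, Y⁆ + ⁅X, J Y⁆)) = 0 := by rw [← hW, hW0]
    exact neg_eq_zero.mp (hJinj _ h4)
  -- hence X ∈ acs g k
  have hXk : X ∈ acs g k := by
    rw [hk1, mem_acs_succ]
    intro Y
    have h1 : ⁅X, Y⁆ = ⁅J X, J Y⁆ := sub_eq_zero.mp (key Y).1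
    rw [h1]
    rw [hk1] at hJX
    exact hJX (J Y)
  have : X ∈ acs g k ⊓ (acs g k).map J := ⟨hXk, ⟨y, hy, hyX⟩⟩
  rw [h] at this
  exact hX0 this
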